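/- arXiv:1507.04195 — 3 statements merged into one kernel-verified Lean document; each statement's English description precedes it below -/
import Mathlib

section
/- Let α, β ∈ π. For all h ∈ H_α one has Δ_{α,β}(h_{(1,αβ)}) · I^R_{α,β} · (1_α ⊗ S_{β⁻¹}(h_{(2,β⁻¹)})) = I^R_{α,β} · (h ⊗ 1_β), where h_{(1,αβ)} ⊗ h_{(2,β⁻¹)} = Δ_{αβ,β⁻¹}(h). -/
open scoped TensorProduct
open TensorProduct

universe u v
set_option maxHeartbeats 1000000

section QH
variable (k : Type u) [Field k] {π : Type v} [Group π]
variable (H : π → Type u) [∀ a, Ring (H a)] [∀ a, Algebra k (H a)]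

/-- Transport along equality of group elements, as a `k`-linear map. -/
def castL {a b : π} (e : a = b) : H a →ₗ[k] H b := by subst e; exact LinearMap.id

/-- Transport along equality of group elements, as a `k`-algebra map. -/
def castA {a b : π} (e : a = b) : H a →ₐ[k] H b := by subst e; exact AlgHom.id k _

/-- A quasi-Hopf `π`-coalgebra (quasi-Turaev group coalgebra without the crossing):
a family of `k`-algebras `{H α}` with comultiplications `Δ_{α,β}`, counit `ε`,
invertible associators `Φ_{α,β,γ}`, antipodes `S_α` and elements `p_α, q_α`. -/
structure QuasiHopfGCoalgebra where
  /-- comultiplication -/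
  Δ : ∀ a b : π, H (a * b) →ₐ[k] (H a ⊗[k] H b)
  /-- counit -/
  ε : H 1 →ₐ[k] k
  /-- the associator `Φ_{α,β,γ} ∈ H_α ⊗ H_β ⊗ H_γ` -/
  Φ : ∀ a b c : π, H a ⊗[k] (H b ⊗[k] H c)
  /-- the inverse associator -/
  Φinv : ∀ a b c : π, H a ⊗[k] (H b ⊗[k] H c)
  Φ_mul_Φinv : ∀ a b c : π, Φ a b c * Φinv a b c = 1
  Φinv_mul_Φ : ∀ a b c : π, Φinv a b c * Φ a b c = 1
  /-- the antipode, a family of bijective `k`-linear maps -/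
  S : ∀ a : π, H a ≃ₗ[k] H a⁻¹
  S_one : ∀ a : π, S a 1 = 1
  /-- the antipode is anti-multiplicative -/
  S_mul : ∀ (a : π) (x y : H a), S a (x * y) = S a y * S a x
  p : ∀ a : π, H a
  q : ∀ a : π, H a
  /-- quasi-coassociativity:
  `(id ⊗ Δ_{β,γ})Δ_{α,βγ}(h) ⬝ Φ_{α,β,γ} = Φ_{α,β,γ} ⬝ (Δ_{α,β} ⊗ id)Δ_{αβ,γ}(h)` -/
  coassoc : ∀ (a b c : π) (h : H (a * b * c)),
    (TensorProduct.map LinearMap.id (Δ b c).toLinearMap)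
        ((Δ a (b * c)) (castL k H (mul_assoc a b c) h)) * Φ a b c
      = Φ a b c *
        (TensorProduct.assoc k (H a) (H b) (H c))
          ((TensorProduct.map (Δ a b).toLinearMap LinearMap.id) ((Δ (a * b) c) h))
  /-- right counit law `(id ⊗ ε)Δ_{α,1} = id` -/
  counit_right : ∀ (a : π) (h : H a),
    (TensorProduct.rid k (H a))
      ((TensorProduct.map LinearMap.id (ε : H 1 →ₗ[k] k))
        ((Δ a 1) (castL k H (mul_one a).symm h))) = h
  /-- left counit law `(ε ⊗ id)Δ_{1,α} = id` -/
  counit_left : ∀ (a : π) (h : H a),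
    (TensorProduct.lid k (H a))
      ((TensorProduct.map (ε : H 1 →ₗ[k] k) LinearMap.id)
        ((Δ 1 a) (castL k H (one_mul a).symm h))) = h
  /-- the pentagon identity -/
  pentagon : ∀ a b c d : π,
    ((1 : H a) ⊗ₜ[k] Φ b c d) *
      (TensorProduct.map LinearMap.id
          ((TensorProduct.assoc k (H b) (H c) (H d)).toLinearMap ∘ₗ
            TensorProduct.map (Δ b c).toLinearMap LinearMap.id)
        (Φ a (b * c) d)) *
      ((TensorProduct.map LinearMap.id (TensorProduct.assoc k (H b) (H c) (H d)).toLinearMap)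
        ((TensorProduct.assoc k (H a) (H b ⊗[k] H c) (H d)) ((Φ a b c) ⊗ₜ[k] (1 : H d))))
    = (TensorProduct.map LinearMap.id
          (TensorProduct.map LinearMap.id (Δ c d).toLinearMap) (Φ a b (c * d))) *
      ((TensorProduct.assoc k (H a) (H b) (H c ⊗[k] H d))
        ((TensorProduct.map (Δ a b).toLinearMap LinearMap.id) (Φ (a * b) c d)))
  /-- normalization `(id ⊗ ε ⊗ id)(Φ_{α,1,β}) = 1 ⊗ 1` -/
  Φ_normal : ∀ a b : π,
    (TensorProduct.map LinearMap.id
      ((TensorProduct.lid k (H b)).toLinearMap ∘ₗ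
        TensorProduct.map (ε : H 1 →ₗ[k] k) LinearMap.id) (Φ a 1 b)) = (1 : H a ⊗[k] H b)
  /-- `S_α(h₁) p_{α⁻¹} h₂ = ε(h) p_{α⁻¹}` for `h ∈ H_1` -/
  antipode_p : ∀ (a : π) (h : H 1),
    (LinearMap.mul' k (H a⁻¹) ∘ₗ
        TensorProduct.map (LinearMap.mulRight k (p a⁻¹) ∘ₗ (S a).toLinearMap) LinearMap.id)
      ((Δ a a⁻¹) (castL k H (mul_inv_cancel a).symm h)) = ε h • p a⁻¹
  /-- `h₁ q_α S_{α⁻¹}(h₂) = ε(h) q_α` for `h ∈ H_1` -/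
  antipode_q : ∀ (a : π) (h : H 1),
    (LinearMap.mul' k (H a) ∘ₗ
        TensorProduct.map (LinearMap.mulRight k (q a))
          (castL k H (inv_inv a) ∘ₗ (S a⁻¹).toLinearMap))
      ((Δ a a⁻¹) (castL k H (mul_inv_cancel a).symm h)) = ε h • q a
  /-- `Y¹_α q_α S_{α⁻¹}(Y²_{α⁻¹}) p_α Y³_α = 1_α` where `Φ_{α,α⁻¹,α} = Y¹ ⊗ Y² ⊗ Y³` -/
  antipode_Φ : ∀ a : π,
    (LinearMap.mul' k (H a) ∘ₗ
      TensorProduct.map (LinearMap.mulRight k (q a))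
        (LinearMap.mul' k (H a) ∘ₗ
          TensorProduct.map
            (LinearMap.mulRight k (p a) ∘ₗ castL k H (inv_inv a) ∘ₗ (S a⁻¹).toLinearMap)
            LinearMap.id))
      (Φ a a⁻¹ a) = 1
  /-- `S_{α⁻¹}(y¹_{α⁻¹}) p_α y²_α q_α S_{α⁻¹}(y³_{α⁻¹}) = 1_α`
  where `Φ⁻¹_{α⁻¹,α,α⁻¹} = y¹ ⊗ y² ⊗ y³` -/
  antipode_Φinv : ∀ a : π,
    (LinearMap.mul' k (H a) ∘ₗ
      TensorProduct.map
        (LinearMap.mulRight k (p a) ∘ₗ castL k H (inv_inv a) ∘ₗ (S a⁻¹).toLinearMap)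
        (LinearMap.mul' k (H a) ∘ₗ
          TensorProduct.map (LinearMap.mulRight k (q a))
            (castL k H (inv_inv a) ∘ₗ (S a⁻¹).toLinearMap)))
      (Φinv a⁻¹ a a⁻¹) = 1

namespace QuasiHopfGCoalgebra
variable {k H}
variable (T : QuasiHopfGCoalgebra k H)

/-- `I^R_{α,β} = y¹_α ⊗ y²_β q_β S_{β⁻¹}(y³_{β⁻¹})` where `Φ⁻¹_{α,β,β⁻¹} = y¹ ⊗ y² ⊗ y³` -/
noncomputable def IR (a b : π) : H a ⊗[k] H b :=
  TensorProduct.map LinearMap.id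
    (LinearMap.mul' k (H b) ∘ₗ
      TensorProduct.map (LinearMap.mulRight k (T.q b))
        (castL k H (inv_inv b) ∘ₗ (T.S b⁻¹).toLinearMap))
    (T.Φinv a b b⁻¹)

/-- `J^R_{α,β} = Y¹_α ⊗ S_β⁻¹(p_{β⁻¹} Y³_{β⁻¹}) Y²_β` where `Φ_{α,β,β⁻¹} = Y¹ ⊗ Y² ⊗ Y³` -/
noncomputable def JR (a b : π) : H a ⊗[k] H b :=
  TensorProduct.map LinearMap.id
    (LinearMap.mul' k (H b) ∘ₗ
      TensorProduct.map ((T.S b).symm.toLinearMap ∘ₗ LinearMap.mulLeft k (T.p b⁻¹))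
          LinearMap.id ∘ₗ
        (TensorProduct.comm k (H b) (H b⁻¹)).toLinearMap)
    (T.Φ a b b⁻¹)

/-- `I^L_{α,β} = Y²_α S_α⁻¹(Y¹_{α⁻¹} q_{α⁻¹}) ⊗ Y³_β` where `Φ_{α⁻¹,α,β} = Y¹ ⊗ Y² ⊗ Y³` -/
noncomputable def IL (a b : π) : H a ⊗[k] H b :=
  TensorProduct.map (LinearMap.mul' k (H a)) LinearMap.id
    ((TensorProduct.assoc k (H a) (H a) (H b)).symm
      ((TensorProduct.leftComm k (H a) (H a) (H b))
        (TensorProduct.map ((T.S a).symm.toLinearMap ∘ₗ LinearMap.mulRight k (T.q a⁻¹))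
          LinearMap.id (T.Φ a⁻¹ a b))))

/-- `J^L_{α,β} = S_{α⁻¹}(y¹_{α⁻¹}) p_α y²_α ⊗ y³_β` where `Φ⁻¹_{α⁻¹,α,β} = y¹ ⊗ y² ⊗ y³` -/
noncomputable def JL (a b : π) : H a ⊗[k] H b :=
  TensorProduct.map (LinearMap.mul' k (H a)) LinearMap.id
    ((TensorProduct.assoc k (H a) (H a) (H b)).symm
      (TensorProduct.map
        (LinearMap.mulRight k (T.p a) ∘ₗ castL k H (inv_inv a) ∘ₗ (T.S a⁻¹).toLinearMap)
        LinearMap.id (T.Φinv a⁻¹ a b)))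

/-- the map `x ⊗ y ↦ Δ_{α,β}(x) ⬝ I^R_{α,β} ⬝ (1_α ⊗ S_{β⁻¹}(y))` -/
noncomputable def lmapIR (a b : π) : (H (a * b) ⊗[k] H b⁻¹) →ₗ[k] (H a ⊗[k] H b) :=
  LinearMap.mul' k (H a ⊗[k] H b) ∘ₗ
    TensorProduct.map
      (LinearMap.mulRight k (T.IR a b) ∘ₗ (T.Δ a b).toLinearMap)
      (TensorProduct.mk k (H a) (H b) 1 ∘ₗ castL k H (inv_inv b) ∘ₗ (T.S b⁻¹).toLinearMap)

/-- the map `x ⊗ y ↦ (1_α ⊗ S_β⁻¹(y)) ⬝ J^R_{α,β} ⬝ Δ_{α,β}(x)` -/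
noncomputable def lmapJR (a b : π) : (H (a * b) ⊗[k] H b⁻¹) →ₗ[k] (H a ⊗[k] H b) :=
  LinearMap.mul' k (H a ⊗[k] H b) ∘ₗ
    TensorProduct.map
      (TensorProduct.mk k (H a) (H b) 1 ∘ₗ (T.S b).symm.toLinearMap)
      (LinearMap.mulLeft k (T.JR a b) ∘ₗ (T.Δ a b).toLinearMap) ∘ₗ
    (TensorProduct.comm k (H (a * b)) (H b⁻¹)).toLinearMap

/-- the map `x ⊗ y ↦ Δ_{α,β}(y) ⬝ I^L_{α,β} ⬝ (S_α⁻¹(x) ⊗ 1_β)` -/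
noncomputable def lmapIL (a b : π) : (H a⁻¹ ⊗[k] H (a * b)) →ₗ[k] (H a ⊗[k] H b) :=
  LinearMap.mul' k (H a ⊗[k] H b) ∘ₗ
    TensorProduct.map
      (LinearMap.mulRight k (T.IL a b) ∘ₗ (T.Δ a b).toLinearMap)
      ((TensorProduct.mk k (H a) (H b)).flip 1 ∘ₗ (T.S a).symm.toLinearMap) ∘ₗ
    (TensorProduct.comm k (H a⁻¹) (H (a * b))).toLinearMap

/-- the map `x ⊗ y ↦ (S_{α⁻¹}(x) ⊗ 1_β) ⬝ J^L_{α,β} ⬝ Δ_{α,β}(y)` -/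
noncomputable def lmapJL (a b : π) : (H a⁻¹ ⊗[k] H (a * b)) →ₗ[k] (H a ⊗[k] H b) :=
  LinearMap.mul' k (H a ⊗[k] H b) ∘ₗ
    TensorProduct.map
      ((TensorProduct.mk k (H a) (H b)).flip 1 ∘ₗ
        castL k H (inv_inv a) ∘ₗ (T.S a⁻¹).toLinearMap)
      (LinearMap.mulLeft k (T.JL a b) ∘ₗ (T.Δ a b).toLinearMap)

end QuasiHopfGCoalgebra
end QH

set_option synthInstance.maxHeartbeats 400000
set_option linter.unusedSectionVars false
section Aux
variable {k : Type u} [Field k] {π : Type v} [Group π]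
variable {H : π → Type u} [∀ a, Ring (H a)] [∀ a, Algebra k (H a)]

lemma castL_rfl {a : π} (e : a = a) : castL k H e = LinearMap.id := rfl

lemma castL_castL {a b c : π} (e : a = b) (e' : b = c) (x : H a) :
    castL k H e' (castL k H e x) = castL k H (e.trans e') x := by
  subst e; subst e'; rfl

lemma castL_mul {a b : π} (e : a = b) (x y : H a) :
    castL k H e (x * y) = castL k H e x * castL k H e y := by subst e; rfl

namespace QuasiHopfGCoalgebra
variable (T : QuasiHopfGCoalgebra k H)

/-- cast-compatibility of `Δ` in the second slot, when the index is `1`. -/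
lemma map_castL_Δ (a : π) {c : π} (e : c = 1) (x : H (a * c)) :
    TensorProduct.map LinearMap.id (castL k H e) ((T.Δ a c) x)
      = (T.Δ a 1) (castL k H (by rw [e]) x) := by
  subst e
  simp only [castL_rfl, TensorProduct.map_id, LinearMap.id_coe, id_eq]

/-- the map `u ⊗ v ↦ u ⬝ q_β ⬝ S_{β⁻¹}(v)` on `H_β ⊗ H_{β⁻¹}` -/
noncomputable def Kmap (b : π) : H b ⊗[k] H b⁻¹ →ₗ[k] H b :=
  LinearMap.mul' k (H b) ∘ₗ
    TensorProduct.map (LinearMap.mulRight k (T.q b))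
      (castL k H (inv_inv b) ∘ₗ (T.S b⁻¹).toLinearMap)

/-- `S_{β⁻¹}` viewed as a map `H_{β⁻¹} → H_β` -/
noncomputable def Sb (b : π) : H b⁻¹ →ₗ[k] H b :=
  castL k H (inv_inv b) ∘ₗ (T.S b⁻¹).toLinearMap

lemma Sb_mul (b : π) (x y : H b⁻¹) :
    T.Sb b (x * y) = T.Sb b y * T.Sb b x := by
  simp only [Sb, LinearMap.comp_apply, LinearEquiv.coe_coe, T.S_mul, castL_mul]

lemma Kmap_tmul (b : π) (v : H b) (y : H b⁻¹) :
    T.Kmap b (v ⊗ₜ[k] y) = v * T.q b * T.Sb b y := by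
  simp only [Kmap, Sb, LinearMap.comp_apply, TensorProduct.map_tmul,
    LinearMap.mul'_apply, LinearMap.mulRight_apply]

lemma Kmap_mul_left (b : π) (v : H b) (y : H b⁻¹) (w : H b ⊗[k] H b⁻¹) :
    T.Kmap b ((v ⊗ₜ[k] y) * w) = v * T.Kmap b w * T.Sb b y := by
  induction w using TensorProduct.induction_on with
  | zero => simp
  | tmul v' y' =>
    simp only [Algebra.TensorProduct.tmul_mul_tmul, Kmap_tmul, Sb_mul]
    noncomm_ring
  | add w₁ w₂ ih₁ ih₂ =>
    simp only [mul_add, map_add, ih₁, ih₂, add_mul]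

lemma Kmap_Δ (b : π) (g : H 1) :
    T.Kmap b ((T.Δ b b⁻¹) (castL k H (mul_inv_cancel b).symm g))
      = T.ε g • T.q b :=
  T.antipode_q b g

lemma Kmap_absorb (b : π) (s : H b ⊗[k] H b⁻¹) (g : H 1) :
    T.Kmap b (s * (T.Δ b b⁻¹) (castL k H (mul_inv_cancel b).symm g))
      = T.ε g • T.Kmap b s := by
  induction s using TensorProduct.induction_on with
  | zero => simp
  | tmul v y =>
    rw [Kmap_mul_left, Kmap_Δ, Kmap_tmul]
    rw [mul_smul_comm, smul_mul_assoc]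
  | add s₁ s₂ ih₁ ih₂ =>
    simp only [add_mul, map_add, ih₁, ih₂, smul_add]

lemma G_mul_left (a b : π) (u : H a) (v : H b) (y : H b⁻¹)
    (t : H a ⊗[k] (H b ⊗[k] H b⁻¹)) :
    TensorProduct.map LinearMap.id (T.Kmap b) ((u ⊗ₜ[k] (v ⊗ₜ[k] y)) * t)
      = ((u ⊗ₜ[k] v : H a ⊗[k] H b) * TensorProduct.map LinearMap.id (T.Kmap b) t)
          * ((1 : H a) ⊗ₜ[k] T.Sb b y) := by
  induction t using TensorProduct.induction_on with
  | zero => simp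
  | tmul x w =>
    simp only [Algebra.TensorProduct.tmul_mul_tmul, TensorProduct.map_tmul,
      LinearMap.id_coe, id_eq, Kmap_mul_left, mul_one]
  | add t₁ t₂ ih₁ ih₂ =>
    simp only [mul_add, map_add, ih₁, ih₂, add_mul]

lemma IR_eq (a b : π) :
    TensorProduct.map LinearMap.id (T.Kmap b) (T.Φinv a b b⁻¹) = T.IR a b := rfl

lemma G_assoc_mul (a b : π) (z : H a ⊗[k] H b) (y : H b⁻¹) :
    TensorProduct.map LinearMap.id (T.Kmap b)
        ((TensorProduct.assoc k (H a) (H b) (H b⁻¹)) (z ⊗ₜ[k] y) * T.Φinv a b b⁻¹)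
      = (z * T.IR a b) * ((1 : H a) ⊗ₜ[k] T.Sb b y) := by
  induction z using TensorProduct.induction_on with
  | zero =>
    simp only [TensorProduct.zero_tmul, LinearEquiv.map_zero, zero_mul,
      LinearMap.map_zero]
  | tmul u v =>
    rw [TensorProduct.assoc_tmul, G_mul_left, IR_eq]
  | add z₁ z₂ ih₁ ih₂ =>
    simp only [TensorProduct.add_tmul, map_add, add_mul, ih₁, ih₂]

lemma lmapIR_eq (a b : π) (t : H (a * b) ⊗[k] H b⁻¹) :
    T.lmapIR a b t
      = TensorProduct.map LinearMap.id (T.Kmap b)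
          ((TensorProduct.assoc k (H a) (H b) (H b⁻¹))
              (TensorProduct.map (T.Δ a b).toLinearMap LinearMap.id t)
            * T.Φinv a b b⁻¹) := by
  induction t using TensorProduct.induction_on with
  | zero =>
    simp only [LinearMap.map_zero, LinearEquiv.map_zero, zero_mul]
  | tmul x y =>
    rw [TensorProduct.map_tmul, LinearMap.id_coe, id_eq, G_assoc_mul]
    simp only [lmapIR, LinearMap.comp_apply, TensorProduct.map_tmul,
      LinearMap.mul'_apply, LinearMap.mulRight_apply, TensorProduct.mk_apply,
      AlgHom.toLinearMap_apply, LinearEquiv.coe_coe]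
    rfl
  | add t₁ t₂ ih₁ ih₂ =>
    simp only [map_add, add_mul, ih₁, ih₂]

lemma G_Phi_mul (a b : π) (t : H a ⊗[k] (H b ⊗[k] H b⁻¹)) (x : H a) (g : H 1) :
    TensorProduct.map LinearMap.id (T.Kmap b)
        (t * (x ⊗ₜ[k] (T.Δ b b⁻¹) (castL k H (mul_inv_cancel b).symm g)))
      = T.ε g • (TensorProduct.map LinearMap.id (T.Kmap b) t * (x ⊗ₜ[k] (1 : H b))) := by
  induction t using TensorProduct.induction_on with
  | zero => simp
  | tmul u s =>
    simp only [Algebra.TensorProduct.tmul_mul_tmul, TensorProduct.map_tmul,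
      LinearMap.id_coe, id_eq, Kmap_absorb, mul_one]
    rw [TensorProduct.tmul_smul]
  | add t₁ t₂ ih₁ ih₂ =>
    simp only [add_mul, map_add, ih₁, ih₂, smul_add]

lemma conj_Φ (a b c : π) {X Y : H a ⊗[k] (H b ⊗[k] H c)}
    (hXY : Y * T.Φ a b c = T.Φ a b c * X) :
    X * T.Φinv a b c = T.Φinv a b c * Y := by
  set Φ := T.Φ a b c with hΦ
  set Φi := T.Φinv a b c with hΦi
  calc X * Φi = (Φi * Φ * X) * Φi := by rw [hΦ, hΦi, T.Φinv_mul_Φ, one_mul]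
    _ = (Φi * (Y * Φ)) * Φi := by rw [mul_assoc Φi Φ X, ← hXY]
    _ = (Φi * Y) * (Φ * Φi) := by rw [← mul_assoc Φi Y Φ, mul_assoc (Φi * Y) Φ Φi]
    _ = Φi * Y := by rw [hΦ, hΦi, T.Φ_mul_Φinv, mul_one]

end QuasiHopfGCoalgebra
end Aux

section Statements
variable {k : Type u} [Field k] {π : Type v} [Group π]
variable {H : π → Type u} [∀ a, Ring (H a)] [∀ a, Algebra k (H a)]

/-- For all `h ∈ H_α`:
`Δ_{α,β}(h₍₁,αβ₎) ⬝ I^R_{α,β} ⬝ (1_α ⊗ S_{β⁻¹}(h₍₂,β⁻¹₎)) = I^R_{α,β} ⬝ (h ⊗ 1_β)`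
where `h₍₁,αβ₎ ⊗ h₍₂,β⁻¹₎ = Δ_{αβ,β⁻¹}(h)`. -/
theorem IR_absorb (T : QuasiHopfGCoalgebra k H) (a b : π) (h : H a) :
    T.lmapIR a b ((T.Δ (a * b) b⁻¹) (castL k H (mul_inv_cancel_right a b).symm h))
      = T.IR a b * (h ⊗ₜ[k] (1 : H b)) := by
  have hD : ∀ D : H a ⊗[k] H (b * b⁻¹),
      TensorProduct.map LinearMap.id (T.Kmap b)
          (T.Φinv a b b⁻¹ * (TensorProduct.map LinearMap.id (T.Δ b b⁻¹).toLinearMap) D)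
        = T.IR a b *
            ((TensorProduct.rid k (H a))
              (TensorProduct.map LinearMap.id
                (T.ε.toLinearMap ∘ₗ castL k H (mul_inv_cancel b)) D) ⊗ₜ[k] (1 : H b)) := by
    intro D
    induction D using TensorProduct.induction_on with
    | zero => simp
    | tmul x g' =>
      have hg : (T.Δ b b⁻¹) g'
          = (T.Δ b b⁻¹) (castL k H (mul_inv_cancel b).symm
              (castL k H (mul_inv_cancel b) g')) := by
        rw [castL_castL, castL_rfl]; rfl
      simp only [TensorProduct.map_tmul, LinearMap.id_coe, id_eq,
        AlgHom.toLinearMap_apply]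
      rw [hg, T.G_Phi_mul, T.IR_eq]
      simp only [TensorProduct.map_tmul, LinearMap.id_coe, id_eq, LinearMap.comp_apply,
        AlgHom.toLinearMap_apply, TensorProduct.rid_tmul]
      rw [← TensorProduct.smul_tmul', mul_smul_comm]
    | add D₁ D₂ ih₁ ih₂ =>
      simp only [map_add, mul_add, ih₁, ih₂, TensorProduct.add_tmul]
  have hc : (TensorProduct.rid k (H a))
      (TensorProduct.map LinearMap.id
        (T.ε.toLinearMap ∘ₗ castL k H (mul_inv_cancel b))
        ((T.Δ a (b * b⁻¹)) (castL k H (mul_assoc a b b⁻¹)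
          (castL k H (mul_inv_cancel_right a b).symm h)))) = h := by
    have e1 : TensorProduct.map (LinearMap.id : H a →ₗ[k] H a)
        (T.ε.toLinearMap ∘ₗ castL k H (mul_inv_cancel b))
        = (TensorProduct.map LinearMap.id T.ε.toLinearMap) ∘ₗ
            (TensorProduct.map LinearMap.id (castL k H (mul_inv_cancel b))) := by
      rw [← TensorProduct.map_comp, LinearMap.id_comp]
    rw [e1, LinearMap.comp_apply, T.map_castL_Δ a (mul_inv_cancel b), castL_castL,
      castL_castL]
    exact T.counit_right a h
  rw [T.lmapIR_eq, T.conj_Φ a b b⁻¹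
      (T.coassoc a b b⁻¹ (castL k H (mul_inv_cancel_right a b).symm h)),
    hD, hc]

end Statements
end

section
/- Let α, β ∈ π. For all a ∈ H_β one has Δ_{α,β}(a_{(2,αβ)}) · I^L_{α,β} · (S_α⁻¹(a_{(1,α⁻¹)}) ⊗ 1_β) = I^L_{α,β} · (1_α ⊗ a), where a_{(1,α⁻¹)} ⊗ a_{(2,αβ)} = Δ_{α⁻¹,αβ}(a). -/
open scoped TensorProduct
open TensorProduct

universe u v
set_option maxHeartbeats 1000000

section Statements
variable {k : Type u} [Field k] {π : Type v} [Group π]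
variable {H : π → Type u} [∀ a, Ring (H a)] [∀ a, Algebra k (H a)]
set_option linter.unusedSectionVars false
set_option synthInstance.maxHeartbeats 1000000
namespace QuasiHopfGCoalgebra
variable (T : QuasiHopfGCoalgebra k H)

@[simp] lemma castL_rfl (c : π) (x : H c) : castL k H rfl x = x := rfl

lemma castL_castL {c d e : π} (h1 : c = d) (h2 : d = e) (x : H c) :
    castL k H h2 (castL k H h1 x) = castL k H (h1.trans h2) x := by
  subst h1; subst h2; rfl

lemma S_symm_mul (c : π) (x y : H c⁻¹) :
    (T.S c).symm (x * y) = (T.S c).symm y * (T.S c).symm x := by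
  apply (T.S c).injective
  rw [T.S_mul, (T.S c).apply_symm_apply, (T.S c).apply_symm_apply,
    (T.S c).apply_symm_apply]

lemma Δ_cast₂ {c d : π} (e : c = d) (a' : π) (e' : a' * c = a' * d) (h : H (a' * c)) :
    (T.Δ a' d) (castL k H e' h)
      = TensorProduct.map LinearMap.id (castL k H e) ((T.Δ a' c) h) := by
  subst e
  show _ = TensorProduct.map LinearMap.id LinearMap.id ((T.Δ a' c) h)
  rw [TensorProduct.map_id]
  rfl

lemma Δ_cast₁ {c d : π} (e : c = d) (b' : π) (e' : c * b' = d * b') (h : H (c * b')) :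
    (T.Δ d b') (castL k H e' h)
      = TensorProduct.map (castL k H e) LinearMap.id ((T.Δ c b') h) := by
  subst e
  show _ = TensorProduct.map LinearMap.id LinearMap.id ((T.Δ c b') h)
  rw [TensorProduct.map_id]
  rfl

lemma S_cast {c d : π} (e : c = d) (x : H c) :
    T.S d (castL k H e x) = castL k H (congrArg Inv.inv e) (T.S c x) := by
  subst e; rfl

/-- transported version of `antipode_q`: for `h ∈ H_1`,
`h₍₁,c⁻¹₎ q_{c⁻¹} S_c(h₍₂,c₎) = ε(h) q_{c⁻¹}` -/
lemma antipode_q' (c : π) (h : H 1) :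
    (LinearMap.mul' k (H c⁻¹) ∘ₗ
      TensorProduct.map (LinearMap.mulRight k (T.q c⁻¹)) (T.S c).toLinearMap)
      ((T.Δ c⁻¹ c) (castL k H (inv_mul_cancel c).symm h)) = T.ε h • T.q c⁻¹ := by
  have hq := T.antipode_q c⁻¹ h
  have e : c = c⁻¹⁻¹ := (inv_inv c).symm
  have e' : c⁻¹ * c = c⁻¹ * c⁻¹⁻¹ := by rw [← e]
  have hcast : castL k H (mul_inv_cancel c⁻¹).symm h
      = castL k H e' (castL k H (inv_mul_cancel c).symm h) := by
    rw [castL_castL]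
  rw [hcast, Δ_cast₂ T e c⁻¹ e'] at hq
  have hS : (castL k H (inv_inv c⁻¹) ∘ₗ (T.S c⁻¹⁻¹).toLinearMap) ∘ₗ castL k H e
      = (T.S c).toLinearMap := by
    ext x
    simp only [LinearMap.comp_apply, LinearEquiv.coe_coe]
    rw [S_cast T e, castL_castL]
    exact castL_rfl _ _
  rw [← hq]
  simp only [LinearMap.comp_apply]
  rw [← LinearMap.comp_apply (TensorProduct.map _ _) (TensorProduct.map _ _),
    ← TensorProduct.map_comp, LinearMap.comp_id, hS]


variable (a b : π)

/-- `u ⊗ (v ⊗ w) ↦ (v ⬝ S_α⁻¹(u q_{α⁻¹})) ⊗ w` -/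
noncomputable def Gmap : H a⁻¹ ⊗[k] (H a ⊗[k] H b) →ₗ[k] H a ⊗[k] H b :=
  TensorProduct.map (LinearMap.mul' k (H a)) LinearMap.id ∘ₗ
    (TensorProduct.assoc k (H a) (H a) (H b)).symm.toLinearMap ∘ₗ
    (TensorProduct.leftComm k (H a) (H a) (H b)).toLinearMap ∘ₗ
    TensorProduct.map ((T.S a).symm.toLinearMap ∘ₗ LinearMap.mulRight k (T.q a⁻¹))
      LinearMap.id

lemma IL_eq : T.IL a b = Gmap T a b (T.Φ a⁻¹ a b) := rfl

@[simp] lemma Gmap_tmul (u : H a⁻¹) (v : H a) (w : H b) :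
    Gmap T a b (u ⊗ₜ (v ⊗ₜ w)) = (v * (T.S a).symm (u * T.q a⁻¹)) ⊗ₜ w := by
  simp [Gmap, TensorProduct.leftComm_tmul, TensorProduct.assoc_symm_tmul]

/-- `p ⊗ (r ⊗ s) ↦ (r ⬝ z ⬝ S_α⁻¹(p)) ⊗ (s ⬝ w)` -/
noncomputable def Gmap2 (z : H a) (w : H b) :
    H a⁻¹ ⊗[k] (H a ⊗[k] H b) →ₗ[k] H a ⊗[k] H b :=
  TensorProduct.map (LinearMap.mul' k (H a)) LinearMap.id ∘ₗ
    (TensorProduct.assoc k (H a) (H a) (H b)).symm.toLinearMap ∘ₗ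
    (TensorProduct.leftComm k (H a) (H a) (H b)).toLinearMap ∘ₗ
    TensorProduct.map (LinearMap.mulLeft k z ∘ₗ (T.S a).symm.toLinearMap)
      (TensorProduct.map LinearMap.id (LinearMap.mulRight k w))

@[simp] lemma Gmap2_tmul (z : H a) (w : H b) (p : H a⁻¹) (r : H a) (s : H b) :
    Gmap2 T a b z w (p ⊗ₜ (r ⊗ₜ s)) = (r * (z * (T.S a).symm p)) ⊗ₜ (s * w) := by
  simp [Gmap2, TensorProduct.leftComm_tmul, TensorProduct.assoc_symm_tmul]

lemma Gmap2_z_zero (w : H b) (t : H a⁻¹ ⊗[k] (H a ⊗[k] H b)) :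
    Gmap2 T a b 0 w t = 0 := by
  induction t using TensorProduct.induction_on with
  | zero => simp
  | add x y hx hy => simp [hx, hy]
  | tmul p rs =>
    induction rs using TensorProduct.induction_on with
    | zero => simp
    | add x y hx hy => simp [TensorProduct.tmul_add, hx, hy]
    | tmul r s => simp

lemma Gmap2_z_add (z z' : H a) (w : H b) (t : H a⁻¹ ⊗[k] (H a ⊗[k] H b)) :
    Gmap2 T a b (z + z') w t = Gmap2 T a b z w t + Gmap2 T a b z' w t := by
  induction t using TensorProduct.induction_on with
  | zero => simp
  | add x y hx hy => simp only [map_add, hx, hy]; abel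
  | tmul p rs =>
    induction rs using TensorProduct.induction_on with
    | zero => simp
    | add x y hx hy =>
      simp only [TensorProduct.tmul_add, map_add, hx, hy]; abel
    | tmul r s => simp [add_mul, mul_add, TensorProduct.add_tmul]

lemma Gmap2_z_smul (c : k) (z : H a) (w : H b) (t : H a⁻¹ ⊗[k] (H a ⊗[k] H b)) :
    Gmap2 T a b (c • z) w t = c • Gmap2 T a b z w t := by
  induction t using TensorProduct.induction_on with
  | zero => simp
  | add x y hx hy => simp only [map_add, hx, hy, smul_add]
  | tmul p rs =>
    induction rs using TensorProduct.induction_on with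
    | zero => simp
    | add x y hx hy =>
      simp only [TensorProduct.tmul_add, map_add, hx, hy, smul_add]
    | tmul r s =>
      simp [TensorProduct.smul_tmul', smul_mul_assoc, mul_smul_comm]


lemma keyA (u : H a⁻¹) (w : H a ⊗[k] H b) :
    w * T.IL a b * ((T.S a).symm u ⊗ₜ 1)
      = Gmap T a b ((u ⊗ₜ w) * T.Φ a⁻¹ a b) := by
  rw [IL_eq]
  generalize T.Φ a⁻¹ a b = Ψ
  induction w using TensorProduct.induction_on with
  | zero => simp [TensorProduct.zero_tmul]
  | add x y hx hy =>
    simp only [TensorProduct.tmul_add, add_mul, mul_add, map_add, hx, hy]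
  | tmul w₁ w₂ =>
    induction Ψ using TensorProduct.induction_on with
    | zero => simp
    | add x y hx hy =>
      simp only [map_add, mul_add, add_mul, hx, hy]
    | tmul p rs =>
      induction rs using TensorProduct.induction_on with
      | zero => simp [TensorProduct.tmul_zero]
      | add x y hx hy =>
        simp only [TensorProduct.tmul_add, map_add, mul_add, add_mul, hx, hy]
      | tmul r s =>
        simp only [Gmap_tmul, Algebra.TensorProduct.tmul_mul_tmul, mul_one]
        rw [mul_assoc u p]
        simp [mul_assoc, T.S_symm_mul]

lemma lmapIL_eq (t : H a⁻¹ ⊗[k] H (a * b)) :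
    T.lmapIL a b t
      = Gmap T a b
          ((TensorProduct.map LinearMap.id (T.Δ a b).toLinearMap) t * T.Φ a⁻¹ a b) := by
  induction t using TensorProduct.induction_on with
  | zero => simp only [map_zero, zero_mul]
  | add x y hx hy => simp only [map_add, add_mul, hx, hy]
  | tmul u v =>
    have lhs : T.lmapIL a b (u ⊗ₜ v)
        = (T.Δ a b) v * T.IL a b * ((T.S a).symm u ⊗ₜ 1) := by
      simp [lmapIL, TensorProduct.comm_tmul, LinearMap.mul'_apply,
        LinearMap.mulRight_apply, TensorProduct.mk_apply, LinearMap.flip_apply]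
    rw [lhs, keyA]
    simp

lemma keyK (Φt : H a⁻¹ ⊗[k] (H a ⊗[k] H b)) (u : H a⁻¹ ⊗[k] H a) (w : H b) :
    Gmap T a b (Φt * (TensorProduct.assoc k (H a⁻¹) (H a) (H b)) (u ⊗ₜ w))
      = Gmap2 T a b
          ((T.S a).symm
            ((LinearMap.mul' k (H a⁻¹) ∘ₗ
              TensorProduct.map (LinearMap.mulRight k (T.q a⁻¹)) (T.S a).toLinearMap) u))
          w Φt := by
  induction u using TensorProduct.induction_on with
  | zero => simp [TensorProduct.zero_tmul, Gmap2_z_zero]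
  | add x y hx hy =>
    simp only [TensorProduct.add_tmul, map_add, mul_add, hx, hy]
    rw [← Gmap2_z_add]
  | tmul c d =>
    simp only [LinearMap.comp_apply, TensorProduct.map_tmul, LinearMap.mul'_apply,
      LinearMap.mulRight_apply, LinearEquiv.coe_coe, TensorProduct.assoc_tmul,
      S_symm_mul, LinearEquiv.symm_apply_apply]
    induction Φt using TensorProduct.induction_on with
    | zero => simp
    | add x y hx hy => simp only [add_mul, map_add, hx, hy]
    | tmul p rs =>
      induction rs using TensorProduct.induction_on with
      | zero => simp [TensorProduct.tmul_zero]
      | add x y hx hy =>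
        simp only [TensorProduct.tmul_add, map_add, mul_add, add_mul, hx, hy]
      | tmul r s =>
        simp only [Algebra.TensorProduct.tmul_mul_tmul, Gmap_tmul, Gmap2_tmul]
        simp [mul_assoc, T.S_symm_mul]


lemma keyL (w : H b) (Φt : H a⁻¹ ⊗[k] (H a ⊗[k] H b)) :
    Gmap2 T a b ((T.S a).symm (T.q a⁻¹)) w Φt
      = Gmap T a b Φt * ((1 : H a) ⊗ₜ w) := by
  induction Φt using TensorProduct.induction_on with
  | zero => simp
  | add x y hx hy => simp only [map_add, add_mul, hx, hy]
  | tmul p rs =>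
    induction rs using TensorProduct.induction_on with
    | zero => simp [TensorProduct.tmul_zero]
    | add x y hx hy =>
      simp only [TensorProduct.tmul_add, map_add, add_mul, mul_add, hx, hy]
    | tmul r s =>
      simp only [Gmap_tmul, Gmap2_tmul, Algebra.TensorProduct.tmul_mul_tmul, mul_one]
      simp [mul_assoc, T.S_symm_mul]

lemma keyC (t0 : H 1 ⊗[k] H b) :
    Gmap T a b (T.Φ a⁻¹ a b *
        (TensorProduct.assoc k (H a⁻¹) (H a) (H b))
          ((TensorProduct.map (T.Δ a⁻¹ a).toLinearMap LinearMap.id)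
            ((TensorProduct.map (castL k H (inv_mul_cancel a).symm) LinearMap.id) t0)))
      = T.IL a b *
          ((1 : H a) ⊗ₜ
            (TensorProduct.lid k (H b))
              ((TensorProduct.map (T.ε : H 1 →ₗ[k] k) LinearMap.id) t0)) := by
  induction t0 using TensorProduct.induction_on with
  | zero => simp only [map_zero, mul_zero, TensorProduct.tmul_zero]
  | add x y hx hy =>
    simp only [map_add, mul_add, TensorProduct.tmul_add, hx, hy]
  | tmul h₁ w =>
    simp only [TensorProduct.map_tmul, LinearMap.id_coe, id_eq, TensorProduct.lid_tmul,
      AlgHom.toLinearMap_apply]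
    rw [keyK, T.antipode_q' a h₁, map_smul, Gmap2_z_smul, keyL, ← IL_eq]
    rw [TensorProduct.tmul_smul, mul_smul_comm]
    rfl

end QuasiHopfGCoalgebra

/-- For all `a ∈ H_β`:
`Δ_{α,β}(a₍₂,αβ₎) ⬝ I^L_{α,β} ⬝ (S_α⁻¹(a₍₁,α⁻¹₎) ⊗ 1_β) = I^L_{α,β} ⬝ (1_α ⊗ a)`
where `a₍₁,α⁻¹₎ ⊗ a₍₂,αβ₎ = Δ_{α⁻¹,αβ}(a)`. -/
theorem IL_absorb (T : QuasiHopfGCoalgebra k H) (a b : π) (x : H b) :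
    T.lmapIL a b ((T.Δ a⁻¹ (a * b)) (castL k H (inv_mul_cancel_left a b).symm x))
      = T.IL a b * ((1 : H a) ⊗ₜ[k] x) := by
  rw [T.lmapIL_eq]
  have eh : b = a⁻¹ * a * b := by rw [inv_mul_cancel, one_mul]
  have h1 : castL k H (inv_mul_cancel_left a b).symm x
      = castL k H (mul_assoc a⁻¹ a b) (castL k H eh x) := by
    rw [QuasiHopfGCoalgebra.castL_castL]
  rw [h1, T.coassoc a⁻¹ a b (castL k H eh x)]
  have e2 : (1 : π) = a⁻¹ * a := (inv_mul_cancel a).symm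
  have e2' : 1 * b = a⁻¹ * a * b := by rw [← e2]
  have h2 : castL k H eh x = castL k H e2' (castL k H (one_mul b).symm x) := by
    rw [QuasiHopfGCoalgebra.castL_castL]
  rw [h2, T.Δ_cast₁ e2 b e2',
    T.keyC a b ((T.Δ 1 b) (castL k H (one_mul b).symm x)), T.counit_left]

end Statements
end

section
/- Let α, β ∈ π. Writing J¹_{αβ} ⊗ J²_{β⁻¹} = J^R_{αβ,β⁻¹}, one has Δ_{α,β}(J¹_{αβ}) · I^R_{α,β} · (1_α ⊗ S_{β⁻¹}(J²_{β⁻¹})) = 1_α ⊗ 1_β. -/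
open scoped TensorProduct
open TensorProduct

universe u v
set_option maxHeartbeats 1000000

section Statements
variable {k : Type u} [Field k] {π : Type v} [Group π]
variable {H : π → Type u} [∀ a, Ring (H a)] [∀ a, Algebra k (H a)]

namespace QHAux

theorem castL_castL {a b c : π} (e : a = b) (f : b = c) (x : H a) :
    castL k H f (castL k H e x) = castL k H (e.trans f) x := by subst e; subst f; rfl

theorem castL_cancel {a b : π} (e : a = b) (x : H a) :
    castL k H e.symm (castL k H e x) = x := by subst e; rfl

theorem castL_mul {a b : π} (e : a = b) (x y : H a) :
    castL k H e (x * y) = castL k H e x * castL k H e y := by subst e; rfl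

theorem castL_one {a b : π} (e : a = b) :
    castL k H e (1 : H a) = 1 := by subst e; rfl

theorem castL_p (T : QuasiHopfGCoalgebra k H) {a b : π} (e : a = b) :
    castL k H e (T.p a) = T.p b := by subst e; rfl


theorem castL_refl {a : π} (e : a = a) (x : H a) : castL k H e x = x := by
  rw [Subsingleton.elim e rfl]; rfl


theorem my_mul_zero {A B : Type u} [Ring A] [Ring B] [Algebra k A] [Algebra k B]
    (x : A ⊗[k] B) : x * 0 = 0 := mul_zero x

theorem my_zero_mul {A B : Type u} [Ring A] [Ring B] [Algebra k A] [Algebra k B]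
    (x : A ⊗[k] B) : 0 * x = 0 := zero_mul x

theorem my_mul_add {A B : Type u} [Ring A] [Ring B] [Algebra k A] [Algebra k B]
    (x y z : A ⊗[k] B) : x * (y + z) = x * y + x * z := mul_add x y z

theorem my_add_mul {A B : Type u} [Ring A] [Ring B] [Algebra k A] [Algebra k B]
    (x y z : A ⊗[k] B) : (x + y) * z = x * z + y * z := add_mul x y z

theorem my_mul_assoc {A B : Type u} [Ring A] [Ring B] [Algebra k A] [Algebra k B]
    (x y z : A ⊗[k] B) : x * y * z = x * (y * z) := mul_assoc x y z

theorem my_one_mul {A B : Type u} [Ring A] [Ring B] [Algebra k A] [Algebra k B]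
    (x : A ⊗[k] B) : 1 * x = x := one_mul x

theorem my_mul_one {A B : Type u} [Ring A] [Ring B] [Algebra k A] [Algebra k B]
    (x : A ⊗[k] B) : x * 1 = x := mul_one x

theorem my_mul_smul_comm {A B : Type u} [Ring A] [Ring B] [Algebra k A] [Algebra k B]
    (c : k) (x y : A ⊗[k] B) : x * (c • y) = c • (x * y) := mul_smul_comm c x y

theorem my_smul_mul_assoc {A B : Type u} [Ring A] [Ring B] [Algebra k A] [Algebra k B]
    (c : k) (x y : A ⊗[k] B) : (c • x) * y = c • (x * y) := smul_mul_assoc c x y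

/-- ext for maps out of `M ⊗ (N ⊗ P)` -/
theorem ext3 {M N P Q : Type u} [AddCommMonoid M] [AddCommMonoid N] [AddCommMonoid P]
    [AddCommMonoid Q] [Module k M] [Module k N] [Module k P] [Module k Q]
    {f g : M ⊗[k] (N ⊗[k] P) →ₗ[k] Q}
    (h : ∀ (m : M) (n : N) (p : P), f (m ⊗ₜ (n ⊗ₜ p)) = g (m ⊗ₜ (n ⊗ₜ p))) : f = g := by
  apply TensorProduct.ext'
  intro m w
  induction w using TensorProduct.induction_on with
  | zero => simp
  | tmul n p => exact h m n p
  | add s t hs ht => rw [tmul_add, map_add, map_add, hs, ht]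

/-- ext for maps out of `M ⊗ (N ⊗ (P ⊗ Q))` -/
theorem ext4 {M N P Q R : Type u} [AddCommMonoid M] [AddCommMonoid N] [AddCommMonoid P]
    [AddCommMonoid Q] [AddCommMonoid R] [Module k M] [Module k N] [Module k P] [Module k Q]
    [Module k R]
    {f g : M ⊗[k] (N ⊗[k] (P ⊗[k] Q)) →ₗ[k] R}
    (h : ∀ (m : M) (n : N) (p : P) (q : Q),
      f (m ⊗ₜ (n ⊗ₜ (p ⊗ₜ q))) = g (m ⊗ₜ (n ⊗ₜ (p ⊗ₜ q)))) : f = g := by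
  apply TensorProduct.ext'
  intro m w
  induction w using TensorProduct.induction_on with
  | zero => simp
  | tmul n v =>
    induction v using TensorProduct.induction_on with
    | zero => rw [tmul_zero, tmul_zero, map_zero, map_zero]
    | tmul p q => exact h m n p q
    | add s t hs ht => rw [tmul_add, tmul_add, map_add, map_add, hs, ht]
  | add s t hs ht => rw [tmul_add, map_add, map_add, hs, ht]

end QHAux
namespace QHAux
set_option linter.unusedSectionVars false

variable {k : Type u} {π : Type v}

section Norm
variable [Field k] [Group π] {H : π → Type u} [∀ a, Ring (H a)] [∀ a, Algebra k (H a)]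
variable (T : QuasiHopfGCoalgebra k H)

/-- `(ε ⊗ ε)` as an algebra map `H 1 ⊗ H 1 →ₐ k`. -/
noncomputable def eps2 : (H 1 ⊗[k] H 1) →ₐ[k] k :=
  (Algebra.TensorProduct.lmul' k).comp (Algebra.TensorProduct.map T.ε T.ε)

theorem eps2_tmul (x y : H 1) : eps2 T (x ⊗ₜ y) = T.ε x * T.ε y := by
  simp [eps2]

/-- contraction of the third slot by the counit (after transporting along `e : g = 1`). -/
noncomputable def ctr3 (a b g : π) (e : g = 1) :
    H a ⊗[k] (H b ⊗[k] H g) →ₗ[k] H a ⊗[k] H b :=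
  TensorProduct.map LinearMap.id
    ((TensorProduct.rid k (H b)).toLinearMap ∘ₗ
      TensorProduct.map LinearMap.id ((T.ε : H 1 →ₗ[k] k) ∘ₗ castL k H e))

theorem ctr3_tmul (a b g : π) (e : g = 1) (x : H a) (y : H b) (z : H g) :
    ctr3 T a b g e (x ⊗ₜ (y ⊗ₜ z)) = T.ε (castL k H e z) • (x ⊗ₜ y) := by
  simp [ctr3]

/-- the third-slot analogue of `Φ_normal` as an algebra map. -/
noncomputable def ctr3A (a b : π) : (H a ⊗[k] (H b ⊗[k] H 1)) →ₐ[k] H a ⊗[k] H b :=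
  Algebra.TensorProduct.map (AlgHom.id k (H a))
    (((Algebra.TensorProduct.rid k k (H b)).toAlgHom).comp
      (Algebra.TensorProduct.map (AlgHom.id k (H b)) T.ε))

theorem ctr3_eq_ctr3A (a b : π) : ctr3 T a b 1 rfl = (ctr3A T a b).toLinearMap := by
  apply ext3
  intro x y z
  simp [ctr3A, ctr3_tmul, castL_refl]

/-- contraction of the last two slots of a four-fold tensor by counits. -/
noncomputable def theta4 (a b : π) :
    (H a ⊗[k] (H b ⊗[k] (H 1 ⊗[k] H 1))) →ₐ[k] H a ⊗[k] H b :=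
  Algebra.TensorProduct.map (AlgHom.id k (H a))
    (((Algebra.TensorProduct.rid k k (H b)).toAlgHom).comp
      (Algebra.TensorProduct.map (AlgHom.id k (H b)) (eps2 T)))

theorem theta4_tmul (a b : π) (x : H a) (y : H b) (w : H 1 ⊗[k] H 1) :
    theta4 T a b (x ⊗ₜ (y ⊗ₜ w)) = eps2 T w • (x ⊗ₜ y) := by
  simp [theta4]

theorem eps2_eq (t : H 1 ⊗[k] H 1) :
    eps2 T t =
      T.ε ((TensorProduct.rid k (H 1))
        (TensorProduct.map LinearMap.id (T.ε : H 1 →ₗ[k] k) t)) := by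
  have h : (eps2 T).toLinearMap =
      (T.ε : H 1 →ₗ[k] k) ∘ₗ (TensorProduct.rid k (H 1)).toLinearMap ∘ₗ
        TensorProduct.map LinearMap.id (T.ε : H 1 →ₗ[k] k) := by
    apply TensorProduct.ext'
    intro x y
    simp [eps2_tmul, mul_comm]
  exact DFunLike.congr_fun h t

/-- `(id ⊗ ε ⊗ ε)(Φ_{g,1,1}) = 1`. -/
theorem inner3_Phi (g : π) :
    ((TensorProduct.rid k (H g)).toLinearMap ∘ₗ
      TensorProduct.map LinearMap.id (eps2 T).toLinearMap) (T.Φ g 1 1) = 1 := by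
  have h : (TensorProduct.rid k (H g)).toLinearMap ∘ₗ
        TensorProduct.map LinearMap.id (eps2 T).toLinearMap =
      ((TensorProduct.rid k (H g)).toLinearMap ∘ₗ
          TensorProduct.map LinearMap.id (T.ε : H 1 →ₗ[k] k)) ∘ₗ
        TensorProduct.map LinearMap.id
          ((TensorProduct.lid k (H 1)).toLinearMap ∘ₗ
            TensorProduct.map (T.ε : H 1 →ₗ[k] k) LinearMap.id) := by
    apply ext3
    intro x y z
    simp [eps2_tmul, mul_comm, smul_smul]
  rw [h, LinearMap.comp_apply, T.Φ_normal g 1]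
  rw [Algebra.TensorProduct.one_def]
  simp

end Norm
end QHAux
namespace QHAux
set_option linter.unusedSectionVars false
set_option synthInstance.maxHeartbeats 1000000
section Norm2
variable [Field k] [Group π] {H : π → Type u} [∀ a, Ring (H a)] [∀ a, Algebra k (H a)]
variable (T : QuasiHopfGCoalgebra k H)

theorem Phi_cast_mid (a : π) {g g' : π} (c : π) (e : g = g') :
    TensorProduct.map LinearMap.id (TensorProduct.map (castL k H e) LinearMap.id)
      (T.Φ a g c) = T.Φ a g' c := by
  subst e
  rw [show castL k H (rfl : g = g) = LinearMap.id from rfl]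
  simp [TensorProduct.map_id]

theorem Phi_cast3 (a b : π) {g g' : π} (e : g = g') :
    TensorProduct.map LinearMap.id (TensorProduct.map LinearMap.id (castL k H e))
      (T.Φ a b g) = T.Φ a b g' := by
  subst e
  rw [show castL k H (rfl : g = g) = LinearMap.id from rfl]
  simp [TensorProduct.map_id]

theorem counit_right' (g : π) (z : H (g * 1)) :
    (TensorProduct.rid k (H g))
      ((TensorProduct.map LinearMap.id (T.ε : H 1 →ₗ[k] k)) (T.Δ g 1 z)) =
      castL k H (mul_one g) z := by
  have h := T.counit_right g (castL k H (mul_one g) z)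
  rwa [castL_cancel] at h

theorem ctr3_cast (a b : π) {g g' : π} (e : g = g') (e' : g' = 1) :
    ctr3 T a b g' e' ∘ₗ
        TensorProduct.map LinearMap.id (TensorProduct.map LinearMap.id (castL k H e)) =
      ctr3 T a b g (e.trans e') := by
  apply ext3
  intro x y z
  simp [ctr3_tmul, castL_castL]

/-- the key pentagon consequence: `(id ⊗ id ⊗ ε)(Φ_{a,b,1}) = 1`. -/
theorem ctr3_Phi_one (a b : π) : ctr3 T a b 1 rfl (T.Φ a b 1) = 1 := by
  classical
  set w := ctr3 T a b 1 rfl (T.Φ a b 1) with hw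
  -- step 1 : `w * w = w` from the pentagon at `(a, b, 1, 1)`
  have hP := congrArg (fun z => theta4 T a b z) (T.pentagon a b 1 1)
  simp only [map_mul] at hP
  -- value of Θ on the five factors
  have hL1 : theta4 T a b ((1 : H a) ⊗ₜ[k] T.Φ b 1 1) = 1 := by
    have : theta4 T a b ((1 : H a) ⊗ₜ[k] T.Φ b 1 1) =
        (1 : H a) ⊗ₜ[k] (((Algebra.TensorProduct.rid k k (H b)).toAlgHom).comp
          (Algebra.TensorProduct.map (AlgHom.id k (H b)) (eps2 T)) (T.Φ b 1 1)) := by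
      simp [theta4]
    rw [this]
    have h2 : ((Algebra.TensorProduct.rid k k (H b)).toAlgHom).comp
        (Algebra.TensorProduct.map (AlgHom.id k (H b)) (eps2 T)) (T.Φ b 1 1) = 1 := by
      have h3 : (((Algebra.TensorProduct.rid k k (H b)).toAlgHom).comp
          (Algebra.TensorProduct.map (AlgHom.id k (H b)) (eps2 T))).toLinearMap =
          (TensorProduct.rid k (H b)).toLinearMap ∘ₗ
            TensorProduct.map LinearMap.id (eps2 T).toLinearMap := by
        apply ext3
        intro x y z
        simp
      have := DFunLike.congr_fun h3 (T.Φ b 1 1)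
      simp only [AlgHom.toLinearMap_apply] at this
      rw [this, inner3_Phi]
    rw [h2, Algebra.TensorProduct.one_def]
  have hL2 : theta4 T a b
      ((TensorProduct.map LinearMap.id
          ((TensorProduct.assoc k (H b) (H 1) (H 1)).toLinearMap ∘ₗ
            TensorProduct.map (T.Δ b 1).toLinearMap LinearMap.id))
        (T.Φ a (b * 1) 1)) = w := by
    have hassoc1 : ∀ (x : H a) (z : H 1) (t : H b ⊗[k] H 1),
        theta4 T a b (x ⊗ₜ ((TensorProduct.assoc k (H b) (H 1) (H 1)) (t ⊗ₜ z))) =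
          T.ε z • (x ⊗ₜ ((TensorProduct.rid k (H b))
            ((TensorProduct.map LinearMap.id (T.ε : H 1 →ₗ[k] k)) t))) := by
      intro x z t
      induction t using TensorProduct.induction_on with
      | zero => simp
      | tmul m n =>
        simp [theta4_tmul, eps2_tmul, TensorProduct.tmul_smul, smul_smul, mul_comm]
      | add s t hs ht =>
        rw [add_tmul, map_add, tmul_add, map_add, hs, ht, map_add, map_add, tmul_add,
          smul_add]
    have comp2 : (theta4 T a b).toLinearMap ∘ₗ
          (TensorProduct.map LinearMap.id
            ((TensorProduct.assoc k (H b) (H 1) (H 1)).toLinearMap ∘ₗ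
              TensorProduct.map (T.Δ b 1).toLinearMap LinearMap.id)) =
        ctr3 T a b 1 rfl ∘ₗ
          TensorProduct.map LinearMap.id
            (TensorProduct.map (castL k H (mul_one b)) LinearMap.id) := by
      apply ext3
      intro x y z
      simp only [LinearMap.comp_apply, TensorProduct.map_tmul, LinearMap.id_apply,
        AlgHom.toLinearMap_apply, LinearEquiv.coe_coe]
      rw [hassoc1, counit_right', ctr3_tmul, castL_refl]
    have h := DFunLike.congr_fun comp2 (T.Φ a (b * 1) 1)
    simp only [LinearMap.comp_apply, AlgHom.toLinearMap_apply] at h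
    rw [h, Phi_cast_mid T a 1 (mul_one b)]
  have hL3 : theta4 T a b
      ((TensorProduct.map LinearMap.id (TensorProduct.assoc k (H b) (H 1) (H 1)).toLinearMap)
        ((TensorProduct.assoc k (H a) (H b ⊗[k] H 1) (H 1)) ((T.Φ a b 1) ⊗ₜ[k] (1 : H 1)))) =
      w := by
    have comp3 : (theta4 T a b).toLinearMap ∘ₗ
          (TensorProduct.map LinearMap.id
            (TensorProduct.assoc k (H b) (H 1) (H 1)).toLinearMap) ∘ₗ
          (TensorProduct.assoc k (H a) (H b ⊗[k] H 1) (H 1)).toLinearMap ∘ₗ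
          ((TensorProduct.mk k (H a ⊗[k] (H b ⊗[k] H 1)) (H 1)).flip (1 : H 1)) =
        ctr3 T a b 1 rfl := by
      apply ext3
      intro x y z
      simp [theta4_tmul, eps2_tmul, ctr3_tmul, castL_refl, TensorProduct.tmul_smul]
    have h := DFunLike.congr_fun comp3 (T.Φ a b 1)
    simp only [LinearMap.comp_apply, LinearMap.flip_apply, TensorProduct.mk_apply,
      LinearEquiv.coe_coe, AlgHom.toLinearMap_apply] at h
    rw [← hw] at h
    exact h
  have hR1 : theta4 T a b
      ((TensorProduct.map LinearMap.id
        (TensorProduct.map LinearMap.id (T.Δ 1 1).toLinearMap)) (T.Φ a b (1 * 1))) = w := by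
    have comp4 : (theta4 T a b).toLinearMap ∘ₗ
          TensorProduct.map LinearMap.id
            (TensorProduct.map LinearMap.id (T.Δ 1 1).toLinearMap) =
        ctr3 T a b (1 * 1) (mul_one 1) := by
      apply ext3
      intro x y z
      simp only [LinearMap.comp_apply, TensorProduct.map_tmul, LinearMap.id_apply,
        AlgHom.toLinearMap_apply]
      rw [theta4_tmul, ctr3_tmul, eps2_eq, counit_right']
    have h := DFunLike.congr_fun comp4 (T.Φ a b (1 * 1))
    simp only [LinearMap.comp_apply, AlgHom.toLinearMap_apply] at h
    rw [h]
    have h2 := DFunLike.congr_fun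
      (ctr3_cast T a b (g := 1) (g' := 1 * 1) (mul_one 1).symm (mul_one 1)) (T.Φ a b 1)
    simp only [LinearMap.comp_apply] at h2
    rw [Phi_cast3 T a b ((mul_one (1 : π)).symm)] at h2
    rw [h2]
  have hR2 : theta4 T a b
      ((TensorProduct.assoc k (H a) (H b) (H 1 ⊗[k] H 1))
        ((TensorProduct.map (T.Δ a b).toLinearMap LinearMap.id) (T.Φ (a * b) 1 1))) = 1 := by
    have ht2 : ∀ (W : H 1 ⊗[k] H 1) (t : H a ⊗[k] H b),
        theta4 T a b ((TensorProduct.assoc k (H a) (H b) (H 1 ⊗[k] H 1)) (t ⊗ₜ W)) =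
          eps2 T W • t := by
      intro W t
      induction t using TensorProduct.induction_on with
      | zero => simp
      | tmul x y => rw [TensorProduct.assoc_tmul, theta4_tmul]
      | add s t hs ht => rw [add_tmul, map_add, map_add, hs, ht, smul_add]
    have comp5 : (theta4 T a b).toLinearMap ∘ₗ
          (TensorProduct.assoc k (H a) (H b) (H 1 ⊗[k] H 1)).toLinearMap ∘ₗ
          TensorProduct.map (T.Δ a b).toLinearMap LinearMap.id =
        (T.Δ a b).toLinearMap ∘ₗ (TensorProduct.rid k (H (a * b))).toLinearMap ∘ₗ
          TensorProduct.map LinearMap.id (eps2 T).toLinearMap := by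
      apply TensorProduct.ext'
      intro X W
      simp only [LinearMap.comp_apply, TensorProduct.map_tmul, LinearMap.id_apply,
        LinearEquiv.coe_coe, AlgHom.toLinearMap_apply]
      rw [ht2, TensorProduct.rid_tmul, map_smul]
    have h := DFunLike.congr_fun comp5 (T.Φ (a * b) 1 1)
    simp only [LinearMap.comp_apply, LinearEquiv.coe_coe, AlgHom.toLinearMap_apply] at h
    rw [h]
    have h2 := inner3_Phi T (a * b)
    simp only [LinearMap.comp_apply, LinearEquiv.coe_coe] at h2
    rw [h2, map_one]
  rw [hL1, hL2, hL3, hR1, hR2, one_mul, mul_one] at hP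
  -- `w * w = w` and `w` is invertible
  have hprod : w * ctr3 T a b 1 rfl (T.Φinv a b 1) = 1 := by
    rw [hw, ctr3_eq_ctr3A]
    simp only [AlgHom.toLinearMap_apply]
    rw [← map_mul, T.Φ_mul_Φinv, map_one]
  calc w = w * 1 := (mul_one w).symm
    _ = w * (w * ctr3 T a b 1 rfl (T.Φinv a b 1)) := by rw [hprod]
    _ = (w * w) * ctr3 T a b 1 rfl (T.Φinv a b 1) := (mul_assoc _ _ _).symm
    _ = w * ctr3 T a b 1 rfl (T.Φinv a b 1) := by rw [hP]
    _ = 1 := hprod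

theorem ctr3_Phi (a b g : π) (e : g = 1) : ctr3 T a b g e (T.Φ a b g) = 1 := by
  subst e
  exact ctr3_Phi_one T a b

theorem ctr3_Phiinv (a b g : π) (e : g = 1) : ctr3 T a b g e (T.Φinv a b g) = 1 := by
  subst e
  show ctr3 T a b 1 rfl (T.Φinv a b 1) = 1
  have hw := ctr3_Phi_one T a b
  have hprod : ctr3 T a b 1 rfl (T.Φinv a b 1) * ctr3 T a b 1 rfl (T.Φ a b 1) = 1 := by
    rw [ctr3_eq_ctr3A]
    simp only [AlgHom.toLinearMap_apply]
    rw [← map_mul, T.Φinv_mul_Φ, map_one]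
  rw [hw, mul_one] at hprod
  exact hprod

end Norm2
end QHAux
namespace QHAux
set_option linter.unusedSectionVars false
set_option synthInstance.maxHeartbeats 1000000
section Main
variable [Field k] [Group π] {H : π → Type u} [∀ a, Ring (H a)] [∀ a, Algebra k (H a)]
variable (T : QuasiHopfGCoalgebra k H)

theorem antipode_q' (g : π) (z : H (g * g⁻¹)) :
    (LinearMap.mul' k (H g) ∘ₗ
        TensorProduct.map (LinearMap.mulRight k (T.q g))
          (castL k H (inv_inv g) ∘ₗ (T.S g⁻¹).toLinearMap))
      (T.Δ g g⁻¹ z) = T.ε (castL k H (mul_inv_cancel g) z) • T.q g := by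
  have h := T.antipode_q g (castL k H (mul_inv_cancel g) z)
  rwa [castL_cancel] at h

theorem antipode_p' (g : π) (z : H (g * g⁻¹)) :
    (LinearMap.mul' k (H g⁻¹) ∘ₗ
        TensorProduct.map (LinearMap.mulRight k (T.p g⁻¹) ∘ₗ (T.S g).toLinearMap)
          LinearMap.id)
      (T.Δ g g⁻¹ z) = T.ε (castL k H (mul_inv_cancel g) z) • T.p g⁻¹ := by
  have h := T.antipode_p g (castL k H (mul_inv_cancel g) z)
  rwa [castL_cancel] at h

theorem Phi_normal' (a d g : π) (e : g = 1) :
    (TensorProduct.map LinearMap.id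
      ((TensorProduct.lid k (H d)).toLinearMap ∘ₗ
        TensorProduct.map ((T.ε : H 1 →ₗ[k] k) ∘ₗ castL k H e) LinearMap.id))
      (T.Φ a g d) = 1 := by
  subst e
  exact T.Φ_normal a d

variable (a b : π)

/-- the "tail" map `x ⊗ y ↦ S(x) p y` (with the result transported into `H b`). -/
noncomputable def tl : H b⁻¹ ⊗[k] H b⁻¹⁻¹ →ₗ[k] H b :=
  castL k H (inv_inv b) ∘ₗ LinearMap.mul' k (H b⁻¹⁻¹) ∘ₗ
    TensorProduct.map (T.S b⁻¹).toLinearMap (LinearMap.mulLeft k (T.p b⁻¹⁻¹))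

theorem tl_tmul (x : H b⁻¹) (y : H b⁻¹⁻¹) :
    tl T b (x ⊗ₜ y) = castL k H (inv_inv b) (T.S b⁻¹ x * (T.p b⁻¹⁻¹ * y)) := by
  simp [tl]

/-- `u ↦ (u¹ ⊗ u²) ⬝ w ⬝ (1 ⊗ S(u³) p u⁴)`. -/
noncomputable def Gg (w : H a ⊗[k] H b) :
    H a ⊗[k] (H b ⊗[k] (H b⁻¹ ⊗[k] H b⁻¹⁻¹)) →ₗ[k] H a ⊗[k] H b :=
  LinearMap.mul' k (H a ⊗[k] H b) ∘ₗ
    TensorProduct.map (LinearMap.mulRight k w)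
      (TensorProduct.mk k (H a) (H b) 1 ∘ₗ tl T b) ∘ₗ
    (TensorProduct.assoc k (H a) (H b) (H b⁻¹ ⊗[k] H b⁻¹⁻¹)).symm.toLinearMap

theorem Gg_tmul (w : H a ⊗[k] H b) (x : H a) (m : H b) (s : H b⁻¹ ⊗[k] H b⁻¹⁻¹) :
    Gg T a b w (x ⊗ₜ (m ⊗ₜ s)) = ((x ⊗ₜ m) * w) * ((1 : H a) ⊗ₜ tl T b s) := by
  simp [Gg]

theorem Gg_assoc (w : H a ⊗[k] H b) (t : H a ⊗[k] H b) (s : H b⁻¹ ⊗[k] H b⁻¹⁻¹) :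
    Gg T a b w ((TensorProduct.assoc k (H a) (H b) (H b⁻¹ ⊗[k] H b⁻¹⁻¹)) (t ⊗ₜ s)) =
      (t * w) * ((1 : H a) ⊗ₜ tl T b s) := by
  simp [Gg]

/-- the map underlying `I^R`. -/
noncomputable def g3 : H a ⊗[k] (H b ⊗[k] H b⁻¹) →ₗ[k] H a ⊗[k] H b :=
  TensorProduct.map LinearMap.id
    (LinearMap.mul' k (H b) ∘ₗ
      TensorProduct.map (LinearMap.mulRight k (T.q b))
        (castL k H (inv_inv b) ∘ₗ (T.S b⁻¹).toLinearMap))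

theorem g3_tmul (x : H a) (y : H b) (z : H b⁻¹) :
    g3 T a b (x ⊗ₜ (y ⊗ₜ z)) =
      x ⊗ₜ ((y * T.q b) * castL k H (inv_inv b) (T.S b⁻¹ z)) := by
  simp [g3]

theorem IR_eq : T.IR a b = g3 T a b (T.Φinv a b b⁻¹) := rfl

/-- `ν(x ⊗ y) = S(x) p y ∈ H b⁻¹⁻¹`. -/
noncomputable def nu : H b⁻¹ ⊗[k] H b⁻¹⁻¹ →ₗ[k] H b⁻¹⁻¹ :=
  LinearMap.mul' k (H b⁻¹⁻¹) ∘ₗ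
    TensorProduct.map (LinearMap.mulRight k (T.p b⁻¹⁻¹) ∘ₗ (T.S b⁻¹).toLinearMap)
      LinearMap.id

theorem nu_tmul (x : H b⁻¹) (y : H b⁻¹⁻¹) :
    nu T b (x ⊗ₜ y) = (T.S b⁻¹ x * T.p b⁻¹⁻¹) * y := by
  simp [nu]

theorem nu_delta (z : H (b⁻¹ * b⁻¹⁻¹)) :
    nu T b (T.Δ b⁻¹ b⁻¹⁻¹ z) =
      T.ε (castL k H (mul_inv_cancel b⁻¹) z) • T.p b⁻¹⁻¹ :=
  antipode_p' T b⁻¹ z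

theorem tl_mul (y : H b⁻¹) (z : H b⁻¹⁻¹) (t : H b⁻¹ ⊗[k] H b⁻¹⁻¹) :
    tl T b (t * (y ⊗ₜ z)) =
      castL k H (inv_inv b) (T.S b⁻¹ y * (nu T b t * z)) := by
  induction t using TensorProduct.induction_on with
  | zero => simp
  | tmul t1 t2 =>
    rw [Algebra.TensorProduct.tmul_mul_tmul, tl_tmul, nu_tmul, T.S_mul]
    congr 1
    noncomm_ring
  | add s t hs ht => rw [add_mul, map_add, hs, ht, map_add, add_mul, ← map_add, ← mul_add,
      ← add_mul, ← map_add]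

/-- `Y ↦ Y¹ q κ(S(Y²) m Y³)`. -/
noncomputable def APm (m : H b⁻¹⁻¹) :
    H b ⊗[k] (H b⁻¹ ⊗[k] H b⁻¹⁻¹) →ₗ[k] H b :=
  LinearMap.mul' k (H b) ∘ₗ
    TensorProduct.map (LinearMap.mulRight k (T.q b))
      (castL k H (inv_inv b) ∘ₗ LinearMap.mul' k (H b⁻¹⁻¹) ∘ₗ
        TensorProduct.map (LinearMap.mulRight k m ∘ₗ (T.S b⁻¹).toLinearMap) LinearMap.id)

theorem APm_tmul (m : H b⁻¹⁻¹) (y1 : H b) (y2 : H b⁻¹) (y3 : H b⁻¹⁻¹) :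
    APm T b m (y1 ⊗ₜ (y2 ⊗ₜ y3)) =
      (y1 * T.q b) * castL k H (inv_inv b) ((T.S b⁻¹ y2 * m) * y3) := by
  simp [APm]

theorem APm_smul (c : k) (m : H b⁻¹⁻¹) (Y : H b ⊗[k] (H b⁻¹ ⊗[k] H b⁻¹⁻¹)) :
    APm T b (c • m) Y = c • APm T b m Y := by
  induction Y using TensorProduct.induction_on with
  | zero => simp
  | tmul y1 w =>
    induction w using TensorProduct.induction_on with
    | zero => simp
    | tmul y2 y3 =>
      rw [APm_tmul, APm_tmul, mul_smul_comm, smul_mul_assoc, map_smul, mul_smul_comm]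
    | add s t hs ht => rw [tmul_add, map_add, map_add, hs, ht, smul_add]
  | add s t hs ht => rw [map_add, map_add, hs, ht, smul_add]

theorem APm_p : APm T b (T.p b⁻¹⁻¹) (T.Φ b b⁻¹ b⁻¹⁻¹) = 1 := by
  have hc : APm T b (T.p b⁻¹⁻¹) =
      (LinearMap.mul' k (H b) ∘ₗ
        TensorProduct.map (LinearMap.mulRight k (T.q b))
          (LinearMap.mul' k (H b) ∘ₗ
            TensorProduct.map
              (LinearMap.mulRight k (T.p b) ∘ₗ castL k H (inv_inv b) ∘ₗ
                (T.S b⁻¹).toLinearMap)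
              LinearMap.id)) ∘ₗ
        TensorProduct.map LinearMap.id
          (TensorProduct.map LinearMap.id (castL k H (inv_inv b))) := by
    apply ext3
    intro y1 y2 y3
    rw [LinearMap.comp_apply, TensorProduct.map_tmul, TensorProduct.map_tmul, APm_tmul]
    simp only [LinearMap.id_apply, LinearMap.comp_apply, TensorProduct.map_tmul,
      LinearMap.mul'_apply, LinearMap.mulRight_apply, LinearEquiv.coe_coe]
    rw [castL_mul, castL_mul, castL_p T (inv_inv b)]
  rw [hc, LinearMap.comp_apply, Phi_cast3 T b b⁻¹ (inv_inv b)]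
  exact T.antipode_Φ b

end Main
end QHAux
namespace QHAux
set_option linter.unusedSectionVars false
set_option synthInstance.maxHeartbeats 1000000
section Main2
variable [Field k] [Group π] {H : π → Type u} [∀ a, Ring (H a)] [∀ a, Algebra k (H a)]
variable (T : QuasiHopfGCoalgebra k H) (a b : π)

/-- the map whose value at `Φ_{ab,b⁻¹,b⁻¹⁻¹}` is `J^R_{ab,b⁻¹}`. -/
noncomputable def NJ : H (a * b) ⊗[k] (H b⁻¹ ⊗[k] H b⁻¹⁻¹) →ₗ[k] H (a * b) ⊗[k] H b⁻¹ :=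
  TensorProduct.map LinearMap.id
    (LinearMap.mul' k (H b⁻¹) ∘ₗ
      TensorProduct.map ((T.S b⁻¹).symm.toLinearMap ∘ₗ LinearMap.mulLeft k (T.p b⁻¹⁻¹))
          LinearMap.id ∘ₗ
        (TensorProduct.comm k (H b⁻¹) (H b⁻¹⁻¹)).toLinearMap)

theorem JR_eq : T.JR (a * b) b⁻¹ = NJ T a b (T.Φ (a * b) b⁻¹ b⁻¹⁻¹) := rfl

theorem mstep1 :
    T.lmapIR a b (T.JR (a * b) b⁻¹) =
      Gg T a b (T.IR a b)
        ((TensorProduct.assoc k (H a) (H b) (H b⁻¹ ⊗[k] H b⁻¹⁻¹))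
          ((TensorProduct.map (T.Δ a b).toLinearMap LinearMap.id)
            (T.Φ (a * b) b⁻¹ b⁻¹⁻¹))) := by
  have hmap : T.lmapIR a b ∘ₗ NJ T a b =
      Gg T a b (T.IR a b) ∘ₗ
        (TensorProduct.assoc k (H a) (H b) (H b⁻¹ ⊗[k] H b⁻¹⁻¹)).toLinearMap ∘ₗ
        TensorProduct.map (T.Δ a b).toLinearMap LinearMap.id := by
    apply ext3
    intro x y z
    simp only [LinearMap.comp_apply, TensorProduct.map_tmul, LinearMap.id_apply,
      LinearEquiv.coe_coe]
    rw [Gg_assoc, tl_tmul]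
    simp only [NJ, QuasiHopfGCoalgebra.lmapIR, LinearMap.comp_apply,
      TensorProduct.map_tmul, LinearMap.id_apply, LinearEquiv.coe_coe,
      TensorProduct.comm_tmul, LinearMap.mul'_apply, LinearMap.mulLeft_apply,
      LinearMap.mulRight_apply, TensorProduct.mk_apply]
    rw [T.S_mul, LinearEquiv.apply_symm_apply]
  have h := DFunLike.congr_fun hmap (T.Φ (a * b) b⁻¹ b⁻¹⁻¹)
  simp only [LinearMap.comp_apply, LinearEquiv.coe_coe] at h
  rw [JR_eq]
  exact h

theorem mstep3 :
    Gg T a b (T.IR a b) ∘ₗ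
        LinearMap.mulRight k
          ((TensorProduct.map LinearMap.id
              (TensorProduct.assoc k (H b) (H b⁻¹) (H b⁻¹⁻¹)).toLinearMap)
            ((TensorProduct.assoc k (H a) (H b ⊗[k] H b⁻¹) (H b⁻¹⁻¹))
              ((T.Φ a b b⁻¹) ⊗ₜ[k] (1 : H b⁻¹⁻¹)))) =
      Gg T a b ((1 : H a) ⊗ₜ T.q b) := by
  apply ext4
  intro u1 u2 u3 u4
  simp only [LinearMap.comp_apply, LinearMap.mulRight_apply]
  have claimF : ∀ (v1 : H a) (v2 : H b) (v3 : H b⁻¹) (F : H a ⊗[k] (H b ⊗[k] H b⁻¹)),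
      (((u1 * v1) ⊗ₜ (u2 * v2)) * g3 T a b F) *
          ((1 : H a) ⊗ₜ[k] tl T b ((u3 * v3) ⊗ₜ u4)) =
        ((u1 ⊗ₜ u2) * g3 T a b ((v1 ⊗ₜ (v2 ⊗ₜ v3)) * F)) *
          ((1 : H a) ⊗ₜ[k] tl T b (u3 ⊗ₜ u4)) := by
    intro v1 v2 v3 F
    induction F using TensorProduct.induction_on with
    | zero => simp
    | tmul f1 w =>
      induction w using TensorProduct.induction_on with
      | zero => simp
      | tmul f2 f3 =>
        rw [Algebra.TensorProduct.tmul_mul_tmul, Algebra.TensorProduct.tmul_mul_tmul,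
          g3_tmul, g3_tmul, tl_tmul, tl_tmul]
        rw [Algebra.TensorProduct.tmul_mul_tmul, Algebra.TensorProduct.tmul_mul_tmul,
          Algebra.TensorProduct.tmul_mul_tmul, Algebra.TensorProduct.tmul_mul_tmul]
        rw [T.S_mul, T.S_mul]
        simp only [castL_mul, mul_one, one_mul, mul_assoc]
      | add s t hs ht =>
        simp only [TensorProduct.tmul_add, map_add, my_mul_add, my_add_mul, hs, ht]
    | add s t hs ht =>
      simp only [map_add, my_mul_add, my_add_mul, hs, ht]
  have claimV : ∀ v : H a ⊗[k] (H b ⊗[k] H b⁻¹),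
      Gg T a b (T.IR a b)
          ((u1 ⊗ₜ (u2 ⊗ₜ (u3 ⊗ₜ u4))) *
            ((TensorProduct.map LinearMap.id
                (TensorProduct.assoc k (H b) (H b⁻¹) (H b⁻¹⁻¹)).toLinearMap)
              ((TensorProduct.assoc k (H a) (H b ⊗[k] H b⁻¹) (H b⁻¹⁻¹))
                (v ⊗ₜ[k] (1 : H b⁻¹⁻¹))))) =
        ((u1 ⊗ₜ u2) * g3 T a b (v * T.Φinv a b b⁻¹)) *
          ((1 : H a) ⊗ₜ[k] tl T b (u3 ⊗ₜ u4)) := by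
    intro v
    induction v using TensorProduct.induction_on with
    | zero =>
      simp only [TensorProduct.zero_tmul, map_zero, my_mul_zero, my_zero_mul]
    | tmul v1 w =>
      induction w using TensorProduct.induction_on with
      | zero =>
        simp only [TensorProduct.tmul_zero, TensorProduct.zero_tmul, map_zero, my_mul_zero,
          my_zero_mul]
      | tmul v2 v3 =>
        simp only [LinearEquiv.coe_coe, TensorProduct.assoc_tmul, TensorProduct.map_tmul,
          LinearMap.id_apply, Algebra.TensorProduct.tmul_mul_tmul, mul_one]
        rw [Gg_tmul, IR_eq]
        exact claimF v1 v2 v3 (T.Φinv a b b⁻¹)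
      | add s t hs ht =>
        simp only [TensorProduct.tmul_add, TensorProduct.add_tmul, map_add, my_mul_add,
          my_add_mul] at hs ht ⊢
        rw [hs, ht]
    | add s t hs ht =>
      simp only [TensorProduct.add_tmul, map_add, my_mul_add, my_add_mul] at hs ht ⊢
      rw [hs, ht]
  rw [claimV (T.Φ a b b⁻¹), T.Φ_mul_Φinv]
  rw [show (1 : H a ⊗[k] (H b ⊗[k] H b⁻¹)) = (1 : H a) ⊗ₜ[k] ((1 : H b) ⊗ₜ[k] (1 : H b⁻¹))
    from by rw [Algebra.TensorProduct.one_def, Algebra.TensorProduct.one_def]]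
  rw [g3_tmul, T.S_one, castL_one, mul_one, one_mul, Gg_tmul]

end Main2
end QHAux
namespace QHAux
set_option linter.unusedSectionVars false
set_option synthInstance.maxHeartbeats 1000000
section Main3
variable [Field k] [Group π] {H : π → Type u} [∀ a, Ring (H a)] [∀ a, Algebra k (H a)]
variable (T : QuasiHopfGCoalgebra k H) (a b : π)

/-- `t ↦ t¹ q S(t²)` transported into `H b`. -/
noncomputable def qc : H b ⊗[k] H b⁻¹ →ₗ[k] H b :=
  LinearMap.mul' k (H b) ∘ₗ
    TensorProduct.map (LinearMap.mulRight k (T.q b))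
      (castL k H (inv_inv b) ∘ₗ (T.S b⁻¹).toLinearMap)

theorem qc_tmul (x : H b) (y : H b⁻¹) :
    qc T b (x ⊗ₜ y) = (x * T.q b) * castL k H (inv_inv b) (T.S b⁻¹ y) := by
  simp [qc]

theorem qc_delta (z : H (b * b⁻¹)) :
    qc T b (T.Δ b b⁻¹ z) = T.ε (castL k H (mul_inv_cancel b) z) • T.q b :=
  antipode_q' T b z

theorem mstep4 :
    Gg T a b ((1 : H a) ⊗ₜ T.q b) ∘ₗ
        LinearMap.mulRight k
          ((TensorProduct.map LinearMap.id
              ((TensorProduct.assoc k (H b) (H b⁻¹) (H b⁻¹⁻¹)).toLinearMap ∘ₗ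
                TensorProduct.map (T.Δ b b⁻¹).toLinearMap LinearMap.id))
            (T.Φ a (b * b⁻¹) b⁻¹⁻¹)) =
      Gg T a b ((1 : H a) ⊗ₜ T.q b) := by
  apply ext4
  intro u1 u2 u3 u4
  simp only [LinearMap.comp_apply, LinearMap.mulRight_apply]
  have claimT : ∀ (z1 : H a) (z3 : H b⁻¹⁻¹) (t : H b ⊗[k] H b⁻¹),
      Gg T a b ((1 : H a) ⊗ₜ T.q b)
          ((u1 ⊗ₜ (u2 ⊗ₜ (u3 ⊗ₜ u4))) *
            (z1 ⊗ₜ ((TensorProduct.assoc k (H b) (H b⁻¹) (H b⁻¹⁻¹)) (t ⊗ₜ z3)))) =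
        (u1 * z1) ⊗ₜ
          ((u2 * qc T b t) *
            (tl T b (u3 ⊗ₜ u4) * castL k H (inv_inv b) z3)) := by
    intro z1 z3 t
    induction t using TensorProduct.induction_on with
    | zero =>
      simp only [TensorProduct.zero_tmul, map_zero, TensorProduct.tmul_zero, my_mul_zero,
        mul_zero, zero_mul, TensorProduct.zero_tmul]
    | tmul t1 t2 =>
      rw [TensorProduct.assoc_tmul, Algebra.TensorProduct.tmul_mul_tmul,
        Algebra.TensorProduct.tmul_mul_tmul, Algebra.TensorProduct.tmul_mul_tmul,
        Gg_tmul, tl_tmul, tl_tmul, qc_tmul]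
      rw [T.S_mul]
      simp only [Algebra.TensorProduct.tmul_mul_tmul, castL_mul, mul_assoc, mul_one,
        one_mul]
    | add s t hs ht =>
      simp only [TensorProduct.add_tmul, map_add, TensorProduct.tmul_add, my_mul_add,
        my_add_mul, add_mul, mul_add] at hs ht ⊢
      rw [hs, ht]
  have claimZ : ∀ z : H a ⊗[k] (H (b * b⁻¹) ⊗[k] H b⁻¹⁻¹),
      Gg T a b ((1 : H a) ⊗ₜ T.q b)
          ((u1 ⊗ₜ (u2 ⊗ₜ (u3 ⊗ₜ u4))) *
            ((TensorProduct.map LinearMap.id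
                ((TensorProduct.assoc k (H b) (H b⁻¹) (H b⁻¹⁻¹)).toLinearMap ∘ₗ
                  TensorProduct.map (T.Δ b b⁻¹).toLinearMap LinearMap.id)) z)) =
        (TensorProduct.map (LinearMap.mulLeft k u1)
          ((TensorProduct.lid k (H b)).toLinearMap ∘ₗ
            TensorProduct.map ((T.ε : H 1 →ₗ[k] k) ∘ₗ castL k H (mul_inv_cancel b))
              (LinearMap.mulLeft k (u2 * T.q b) ∘ₗ
                LinearMap.mulLeft k (tl T b (u3 ⊗ₜ u4)) ∘ₗ castL k H (inv_inv b)))) z := by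
    intro z
    induction z using TensorProduct.induction_on with
    | zero => simp only [map_zero, my_mul_zero]
    | tmul z1 w =>
      induction w using TensorProduct.induction_on with
      | zero => simp only [TensorProduct.tmul_zero, map_zero, my_mul_zero]
      | tmul z2 z3 =>
        simp only [TensorProduct.map_tmul, LinearMap.comp_apply, LinearMap.id_apply,
          LinearEquiv.coe_coe, AlgHom.toLinearMap_apply]
        rw [claimT, qc_delta]
        simp only [TensorProduct.lid_tmul, LinearMap.mulLeft_apply, smul_mul_assoc,
          mul_smul_comm, TensorProduct.tmul_smul]
        rfl
      | add s t hs ht =>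
        simp only [TensorProduct.tmul_add, map_add, my_mul_add] at hs ht ⊢
        rw [hs, ht]
    | add s t hs ht =>
      simp only [TensorProduct.add_tmul, map_add, my_mul_add] at hs ht ⊢
      rw [hs, ht]
  rw [claimZ (T.Φ a (b * b⁻¹) b⁻¹⁻¹)]
  have hsplit : (TensorProduct.map (LinearMap.mulLeft k u1)
        ((TensorProduct.lid k (H b)).toLinearMap ∘ₗ
          TensorProduct.map ((T.ε : H 1 →ₗ[k] k) ∘ₗ castL k H (mul_inv_cancel b))
            (LinearMap.mulLeft k (u2 * T.q b) ∘ₗ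
              LinearMap.mulLeft k (tl T b (u3 ⊗ₜ u4)) ∘ₗ castL k H (inv_inv b)))) =
      (TensorProduct.map (LinearMap.mulLeft k u1)
          (LinearMap.mulLeft k (u2 * T.q b) ∘ₗ
            LinearMap.mulLeft k (tl T b (u3 ⊗ₜ u4)) ∘ₗ castL k H (inv_inv b))) ∘ₗ
        (TensorProduct.map LinearMap.id
          ((TensorProduct.lid k (H b⁻¹⁻¹)).toLinearMap ∘ₗ
            TensorProduct.map ((T.ε : H 1 →ₗ[k] k) ∘ₗ castL k H (mul_inv_cancel b))
              LinearMap.id)) := by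
    apply ext3
    intro x y z
    simp
  rw [hsplit, LinearMap.comp_apply, Phi_normal' T a b⁻¹⁻¹ (b * b⁻¹) (mul_inv_cancel b)]
  rw [Algebra.TensorProduct.one_def, TensorProduct.map_tmul, Gg_tmul]
  simp only [LinearMap.comp_apply, LinearMap.mulLeft_apply, castL_one, mul_one, one_mul,
    Algebra.TensorProduct.tmul_mul_tmul]

end Main3
end QHAux
namespace QHAux
set_option linter.unusedSectionVars false
set_option synthInstance.maxHeartbeats 1000000
section Main4
variable [Field k] [Group π] {H : π → Type u} [∀ a, Ring (H a)] [∀ a, Algebra k (H a)]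
variable (T : QuasiHopfGCoalgebra k H) (a b : π)

theorem mstep5 :
    Gg T a b ((1 : H a) ⊗ₜ T.q b)
        ((TensorProduct.map LinearMap.id
            (TensorProduct.map LinearMap.id (T.Δ b⁻¹ b⁻¹⁻¹).toLinearMap))
          (T.Φinv a b (b⁻¹ * b⁻¹⁻¹)) * ((1 : H a) ⊗ₜ[k] T.Φ b b⁻¹ b⁻¹⁻¹)) = 1 := by
  have hmap : Gg T a b ((1 : H a) ⊗ₜ T.q b) ∘ₗ
        LinearMap.mulRight k ((1 : H a) ⊗ₜ[k] T.Φ b b⁻¹ b⁻¹⁻¹) ∘ₗ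
        TensorProduct.map LinearMap.id
          (TensorProduct.map LinearMap.id (T.Δ b⁻¹ b⁻¹⁻¹).toLinearMap) =
      ctr3 T a b (b⁻¹ * b⁻¹⁻¹) (mul_inv_cancel b⁻¹) := by
    apply ext3
    intro x1 x2 x3
    simp only [LinearMap.comp_apply, TensorProduct.map_tmul, LinearMap.id_apply,
      LinearMap.mulRight_apply, AlgHom.toLinearMap_apply]
    rw [Algebra.TensorProduct.tmul_mul_tmul]
    have claimY : ∀ (t : H b⁻¹ ⊗[k] H b⁻¹⁻¹) (Y : H b ⊗[k] (H b⁻¹ ⊗[k] H b⁻¹⁻¹)),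
        Gg T a b ((1 : H a) ⊗ₜ T.q b) ((x1 * 1) ⊗ₜ ((x2 ⊗ₜ t) * Y)) =
          x1 ⊗ₜ (x2 * APm T b (nu T b t) Y) := by
      intro t Y
      induction Y using TensorProduct.induction_on with
      | zero => simp only [my_mul_zero, TensorProduct.tmul_zero, map_zero, mul_zero]
      | tmul Y1 w =>
        induction w using TensorProduct.induction_on with
        | zero => simp only [TensorProduct.tmul_zero, my_mul_zero, map_zero, mul_zero]
        | tmul Y2 Y3 =>
          rw [Algebra.TensorProduct.tmul_mul_tmul, Gg_tmul, tl_mul, APm_tmul, mul_one]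
          rw [Algebra.TensorProduct.tmul_mul_tmul, Algebra.TensorProduct.tmul_mul_tmul]
          simp only [castL_mul, mul_assoc, mul_one, one_mul]
        | add s t hs ht =>
          simp only [TensorProduct.tmul_add, my_mul_add, map_add, mul_add] at hs ht ⊢
          rw [hs, ht]
      | add s t hs ht =>
        simp only [my_mul_add, map_add, mul_add, TensorProduct.tmul_add] at hs ht ⊢
        rw [hs, ht]
    rw [claimY (T.Δ b⁻¹ b⁻¹⁻¹ x3) (T.Φ b b⁻¹ b⁻¹⁻¹), nu_delta, APm_smul, APm_p,
      ctr3_tmul]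
    simp only [mul_smul_comm, mul_one, TensorProduct.tmul_smul]
  have h := DFunLike.congr_fun hmap (T.Φinv a b (b⁻¹ * b⁻¹⁻¹))
  simp only [LinearMap.comp_apply, LinearMap.mulRight_apply] at h
  rw [h, ctr3_Phiinv]

theorem IR_JR_aux : T.lmapIR a b (T.JR (a * b) b⁻¹) = 1 := by
  rw [mstep1]
  have hcoe : TensorProduct.map LinearMap.id
        (TensorProduct.map LinearMap.id (T.Δ b⁻¹ b⁻¹⁻¹).toLinearMap) =
      (Algebra.TensorProduct.map (AlgHom.id k (H a))
        (Algebra.TensorProduct.map (AlgHom.id k (H b)) (T.Δ b⁻¹ b⁻¹⁻¹))).toLinearMap := by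
    apply ext3
    intro x y z
    rfl
  have hXX' : (TensorProduct.map LinearMap.id
        (TensorProduct.map LinearMap.id (T.Δ b⁻¹ b⁻¹⁻¹).toLinearMap))
          (T.Φinv a b (b⁻¹ * b⁻¹⁻¹)) *
      (TensorProduct.map LinearMap.id
        (TensorProduct.map LinearMap.id (T.Δ b⁻¹ b⁻¹⁻¹).toLinearMap))
          (T.Φ a b (b⁻¹ * b⁻¹⁻¹)) = 1 := by
    rw [hcoe]
    simp only [AlgHom.toLinearMap_apply]
    rw [← map_mul, T.Φinv_mul_Φ, map_one]
  have hpent := T.pentagon a b b⁻¹ b⁻¹⁻¹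
  have hT : (TensorProduct.assoc k (H a) (H b) (H b⁻¹ ⊗[k] H b⁻¹⁻¹))
      ((TensorProduct.map (T.Δ a b).toLinearMap LinearMap.id)
        (T.Φ (a * b) b⁻¹ b⁻¹⁻¹)) =
      (TensorProduct.map LinearMap.id
          (TensorProduct.map LinearMap.id (T.Δ b⁻¹ b⁻¹⁻¹).toLinearMap))
        (T.Φinv a b (b⁻¹ * b⁻¹⁻¹)) *
      (((1 : H a) ⊗ₜ[k] T.Φ b b⁻¹ b⁻¹⁻¹) *
        (TensorProduct.map LinearMap.id
            ((TensorProduct.assoc k (H b) (H b⁻¹) (H b⁻¹⁻¹)).toLinearMap ∘ₗ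
              TensorProduct.map (T.Δ b b⁻¹).toLinearMap LinearMap.id))
          (T.Φ a (b * b⁻¹) b⁻¹⁻¹) *
        (TensorProduct.map LinearMap.id
            (TensorProduct.assoc k (H b) (H b⁻¹) (H b⁻¹⁻¹)).toLinearMap)
          ((TensorProduct.assoc k (H a) (H b ⊗[k] H b⁻¹) (H b⁻¹⁻¹))
            ((T.Φ a b b⁻¹) ⊗ₜ[k] (1 : H b⁻¹⁻¹)))) := by
    rw [hpent, ← my_mul_assoc, hXX', my_one_mul]
  rw [hT]
  have h3 : ∀ u, Gg T a b (T.IR a b)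
      (u * (TensorProduct.map LinearMap.id
          (TensorProduct.assoc k (H b) (H b⁻¹) (H b⁻¹⁻¹)).toLinearMap)
        ((TensorProduct.assoc k (H a) (H b ⊗[k] H b⁻¹) (H b⁻¹⁻¹))
          ((T.Φ a b b⁻¹) ⊗ₜ[k] (1 : H b⁻¹⁻¹)))) =
      Gg T a b ((1 : H a) ⊗ₜ T.q b) u := by
    intro u
    have h := DFunLike.congr_fun (mstep3 T a b) u
    simpa only [LinearMap.comp_apply, LinearMap.mulRight_apply] using h
  have h4 : ∀ u, Gg T a b ((1 : H a) ⊗ₜ T.q b)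
      (u * (TensorProduct.map LinearMap.id
          ((TensorProduct.assoc k (H b) (H b⁻¹) (H b⁻¹⁻¹)).toLinearMap ∘ₗ
            TensorProduct.map (T.Δ b b⁻¹).toLinearMap LinearMap.id))
        (T.Φ a (b * b⁻¹) b⁻¹⁻¹)) =
      Gg T a b ((1 : H a) ⊗ₜ T.q b) u := by
    intro u
    have h := DFunLike.congr_fun (mstep4 T a b) u
    simpa only [LinearMap.comp_apply, LinearMap.mulRight_apply] using h
  rw [← my_mul_assoc, ← my_mul_assoc, h3, h4]
  exact mstep5 T a b

end Main4
end QHAux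
/-- Writing `J¹_{αβ} ⊗ J²_{β⁻¹} = J^R_{αβ,β⁻¹}`:
`Δ_{α,β}(J¹_{αβ}) ⬝ I^R_{α,β} ⬝ (1_α ⊗ S_{β⁻¹}(J²_{β⁻¹})) = 1_α ⊗ 1_β`. -/
theorem IR_JR (T : QuasiHopfGCoalgebra k H) (a b : π) :
    T.lmapIR a b (T.JR (a * b) b⁻¹) = 1 := QHAux.IR_JR_aux T a b

end Statements
end
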